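/- Fix x₀ ∈ I, let φ(x) = ∫_{x₀}^x q_el(r) dr and let Γ(x) be the rotation matrix with rows (cos φ(x), −sin φ(x)) and (sin φ(x), cos φ(x)). Then u is a solution of τu = zu if and only if v = Γ⁻¹u is a solution of τ̃v = zv, where τ̃ is the Dirac differential expression with electrostatic potential q̃_el = 0, anomalous magnetic moment q̃_am = q_am cos(2φ) − (m+q_sc) sin(2φ), and mass-plus-scalar term m̃+q̃_sc = (m+q_sc) cos(2φ) + q_am sin(2φ). -/

import Mathlib

open MeasureTheory Set Filter Topology Complex Asymptotics

noncomputable section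

/-- `q` is locally integrable on the interval `(a, b)`. -/
def LocInt (a b : ℝ) (q : ℝ → ℝ) : Prop :=
  ∀ x ∈ Set.Ioo a b, ∀ y ∈ Set.Ioo a b, IntervalIntegrable q MeasureTheory.volume x y

/-- The Wronskian `W_x(f,g) = f₁(x)g₂(x) - f₂(x)g₁(x)`. -/
def Wr (f g : ℝ → ℂ × ℂ) (x : ℝ) : ℂ :=
  (f x).1 * (g x).2 - (f x).2 * (g x).1

/-- `g = τ f` on `(a,b)` in the locally absolutely continuous sense, where `τ` is the
one-dimensional Dirac differential expression `τ = (1/i) σ₂ d/dx + Q(x)` with potential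
matrix entries `Q11 Q12 Q21 Q22`. -/
def IsTau (a b : ℝ) (Q11 Q12 Q21 Q22 : ℝ → ℝ) (f g : ℝ → ℂ × ℂ) : Prop :=
  ContinuousOn f (Set.Ioo a b) ∧
  ∀ x₀ ∈ Set.Ioo a b, ∀ x ∈ Set.Ioo a b,
    IntervalIntegrable (fun t => (g t).2 - (Q21 t : ℂ) * (f t).1 - (Q22 t : ℂ) * (f t).2)
      MeasureTheory.volume x₀ x ∧
    IntervalIntegrable (fun t => (Q11 t : ℂ) * (f t).1 + (Q12 t : ℂ) * (f t).2 - (g t).1)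
      MeasureTheory.volume x₀ x ∧
    (f x).1 = (f x₀).1 + ∫ t in x₀..x, ((g t).2 - (Q21 t : ℂ) * (f t).1 - (Q22 t : ℂ) * (f t).2) ∧
    (f x).2 = (f x₀).2 + ∫ t in x₀..x, ((Q11 t : ℂ) * (f t).1 + (Q12 t : ℂ) * (f t).2 - (g t).1)

/-- `u` is a solution of `τ u = z u` on `(a,b)`. -/
def IsSol (a b : ℝ) (Q11 Q12 Q21 Q22 : ℝ → ℝ) (z : ℂ) (u : ℝ → ℂ × ℂ) : Prop :=
  IsTau a b Q11 Q12 Q21 Q22 u (fun x => z • u x)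

/-- Solution of the Dirac equation with mass `m`, electrostatic potential `qel`,
anomalous magnetic moment `qam` and scalar potential `qsc`. -/
def DiracSol (a b m : ℝ) (qel qam qsc : ℝ → ℝ) (z : ℂ) (u : ℝ → ℂ × ℂ) : Prop :=
  IsSol a b (fun x => qel x + m + qsc x) qam qam (fun x => qel x - m - qsc x) z u

lemma fub_le (y x : ℝ) (hyx : y ≤ x) (f g : ℝ → ℂ)
    (hf : IntervalIntegrable f volume y x) (hg : IntervalIntegrable g volume y x) :
    ∫ t in y..x, ((g t * ∫ s in y..t, f s) + f t * ∫ s in y..t, g s)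
      = (∫ s in y..x, f s) * ∫ s in y..x, g s := by
  have hIfc : ContinuousOn (fun t => ∫ s in y..t, f s) (Set.uIcc y x) :=
    intervalIntegral.continuousOn_primitive_interval' hf Set.left_mem_uIcc
  have hIgc : ContinuousOn (fun t => ∫ s in y..t, g s) (Set.uIcc y x) :=
    intervalIntegral.continuousOn_primitive_interval' hg Set.left_mem_uIcc
  have hgIf : IntervalIntegrable (fun t => g t * ∫ s in y..t, f s) volume y x :=
    hg.mul_continuousOn hIfc
  have hfIg : IntervalIntegrable (fun t => f t * ∫ s in y..t, g s) volume y x :=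
    hf.mul_continuousOn hIgc
  set K : ℝ × ℝ → ℂ := Set.indicator {p : ℝ × ℝ | p.1 < p.2} (fun p => g p.1 * f p.2) with hK
  set μ : Measure ℝ := volume.restrict (Set.Ioc y x) with hμ
  have hfμ : Integrable f μ := hf.1
  have hgμ : Integrable g μ := hg.1
  have hKint : Integrable K (μ.prod μ) :=
    (hgμ.mul_prod hfμ).indicator (measurableSet_lt measurable_fst measurable_snd)
  have swap : ∫ t, ∫ s, K (t, s) ∂μ ∂μ = ∫ s, ∫ t, K (t, s) ∂μ ∂μ :=
    MeasureTheory.integral_integral_swap hKint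
  -- evaluate inner integral (t outer)
  have inner1 : ∀ t ∈ Set.Ioc y x,
      (∫ s, K (t, s) ∂μ) = g t * ((∫ s in y..x, f s) - ∫ s in y..t, f s) := by
    intro t ht
    have h1 : (fun s => K (t, s)) = Set.indicator (Set.Ioi t) (fun s => g t * f s) := by
      funext s
      simp only [hK, Set.indicator, Set.mem_Ioi, Set.mem_setOf_eq]
    rw [h1, MeasureTheory.integral_indicator measurableSet_Ioi, hμ,
      MeasureTheory.Measure.restrict_restrict measurableSet_Ioi]
    have h2 : Set.Ioi t ∩ Set.Ioc y x = Set.Ioc t x := by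
      ext s; simp only [Set.mem_inter_iff, Set.mem_Ioi, Set.mem_Ioc]
      constructor
      · rintro ⟨h, _, h3⟩; exact ⟨h, h3⟩
      · rintro ⟨h, h3⟩; exact ⟨h, lt_trans ht.1 h, h3⟩
    rw [h2, MeasureTheory.integral_const_mul, ← intervalIntegral.integral_of_le ht.2]
    congr 1
    have htu : t ∈ Set.uIcc y x := by
      rw [Set.uIcc_of_le hyx]; exact ⟨ht.1.le, ht.2⟩
    have := intervalIntegral.integral_add_adjacent_intervals
      (hf.mono_set (Set.uIcc_subset_uIcc Set.left_mem_uIcc htu))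
      (hf.mono_set (Set.uIcc_subset_uIcc htu Set.right_mem_uIcc))
    rw [← this]; ring
  have inner2 : ∀ p ∈ Set.Ioc y x,
      (∫ t, K (t, p) ∂μ) = (∫ s in y..p, g s) * f p := by
    intro p hp
    have h1 : (fun t => K (t, p)) = Set.indicator (Set.Iio p) (fun t => g t * f p) := by
      funext t
      simp only [hK, Set.indicator, Set.mem_Iio, Set.mem_setOf_eq]
    rw [h1, MeasureTheory.integral_indicator measurableSet_Iio, hμ,
      MeasureTheory.Measure.restrict_restrict measurableSet_Iio]
    have h2 : Set.Iio p ∩ Set.Ioc y x = Set.Ioo y p := by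
      ext t; simp only [Set.mem_inter_iff, Set.mem_Iio, Set.mem_Ioc, Set.mem_Ioo]
      constructor
      · rintro ⟨h, h3, _⟩; exact ⟨h3, h⟩
      · rintro ⟨h3, h⟩; exact ⟨h, h3, le_trans h.le hp.2⟩
    rw [h2, MeasureTheory.integral_mul_const, ← MeasureTheory.integral_Ioc_eq_integral_Ioo,
      ← intervalIntegral.integral_of_le hp.1.le]
  -- rewrite both sides of swap
  have lhs : ∫ t, ∫ s, K (t, s) ∂μ ∂μ
      = (∫ s in y..x, g s) * (∫ s in y..x, f s) - ∫ t in y..x, g t * ∫ s in y..t, f s := by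
    rw [hμ]
    rw [MeasureTheory.setIntegral_congr_fun measurableSet_Ioc inner1]
    rw [← intervalIntegral.integral_of_le hyx]
    have hsplit : IntervalIntegrable (fun t => g t * ∫ s in y..x, f s) volume y x :=
      hg.mul_const _
    have : ∫ t in y..x, g t * ((∫ s in y..x, f s) - ∫ s in y..t, f s)
        = (∫ t in y..x, g t * ∫ s in y..x, f s) - ∫ t in y..x, g t * ∫ s in y..t, f s := by
      rw [← intervalIntegral.integral_sub hsplit hgIf]
      congr 1; funext t; ring
    rw [this, intervalIntegral.integral_mul_const]
  have rhs : ∫ s, ∫ t, K (t, s) ∂μ ∂μ = ∫ p in y..x, (∫ s in y..p, g s) * f p := by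
    rw [hμ, MeasureTheory.setIntegral_congr_fun measurableSet_Ioc inner2,
      ← intervalIntegral.integral_of_le hyx]
  rw [lhs, rhs] at swap
  have hIgf : IntervalIntegrable (fun p => (∫ s in y..p, g s) * f p) volume y x :=
    hf.continuousOn_mul hIgc
  rw [intervalIntegral.integral_add hgIf hfIg]
  have : ∫ t in y..x, f t * ∫ s in y..t, g s = ∫ p in y..x, (∫ s in y..p, g s) * f p := by
    congr 1; funext t; ring
  rw [this]
  linear_combination -swap


lemma prod_rule_le (y x : ℝ) (hyx : y ≤ x) (f g F G : ℝ → ℂ)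
    (hf : IntervalIntegrable f volume y x) (hg : IntervalIntegrable g volume y x)
    (hF : ∀ t ∈ Set.uIcc y x, F t = F y + ∫ s in y..t, f s)
    (hG : ∀ t ∈ Set.uIcc y x, G t = G y + ∫ s in y..t, g s) :
    F x * G x = F y * G y + ∫ t in y..x, (F t * g t + f t * G t) := by
  have hIfc : ContinuousOn (fun t => ∫ s in y..t, f s) (Set.uIcc y x) :=
    intervalIntegral.continuousOn_primitive_interval' hf Set.left_mem_uIcc
  have hIgc : ContinuousOn (fun t => ∫ s in y..t, g s) (Set.uIcc y x) :=
    intervalIntegral.continuousOn_primitive_interval' hg Set.left_mem_uIcc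
  have h1 : ∫ t in y..x, (F t * g t + f t * G t)
      = ∫ t in y..x, ((F y * g t + f t * G y)
          + ((g t * ∫ s in y..t, f s) + f t * ∫ s in y..t, g s)) := by
    apply intervalIntegral.integral_congr
    intro t ht
    simp only
    rw [hF t ht, hG t ht]; ring
  have hi1 : IntervalIntegrable (fun t => F y * g t + f t * G y) volume y x :=
    (hg.const_mul _).add (hf.mul_const _)
  have hi2 : IntervalIntegrable
      (fun t => (g t * ∫ s in y..t, f s) + f t * ∫ s in y..t, g s) volume y x :=
    (hg.mul_continuousOn hIfc).add (hf.mul_continuousOn hIgc)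
  rw [h1, intervalIntegral.integral_add hi1 hi2, fub_le y x hyx f g hf hg,
    intervalIntegral.integral_add (hg.const_mul _) (hf.mul_const _),
    intervalIntegral.integral_const_mul, intervalIntegral.integral_mul_const]
  rw [hF x Set.right_mem_uIcc, hG x Set.right_mem_uIcc]
  ring

lemma prod_rule (y x : ℝ) (f g F G : ℝ → ℂ)
    (hf : IntervalIntegrable f volume y x) (hg : IntervalIntegrable g volume y x)
    (hF : ∀ t ∈ Set.uIcc y x, F t = F y + ∫ s in y..t, f s)
    (hG : ∀ t ∈ Set.uIcc y x, G t = G y + ∫ s in y..t, g s) :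
    F x * G x = F y * G y + ∫ t in y..x, (F t * g t + f t * G t) := by
  rcases le_total y x with hyx | hxy
  · exact prod_rule_le y x hyx f g F G hf hg hF hG
  · have huicc : Set.uIcc x y = Set.uIcc y x := Set.uIcc_comm x y
    have hbase : ∀ (h : ℝ → ℂ), IntervalIntegrable h volume y x →
        (∀ t ∈ Set.uIcc y x, ∀ H : ℝ → ℂ,
          (∀ r ∈ Set.uIcc y x, H r = H y + ∫ s in y..r, h s) →
          H t = H x + ∫ s in x..t, h s) := by
      intro h hh t ht H hH
      have h1 := intervalIntegral.integral_add_adjacent_intervals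
        (hh.mono_set (Set.uIcc_subset_uIcc Set.left_mem_uIcc Set.right_mem_uIcc))
        (hh.mono_set (Set.uIcc_subset_uIcc Set.right_mem_uIcc ht))
      rw [hH t ht, hH x Set.right_mem_uIcc, ← h1]; ring
    have key := prod_rule_le x y hxy f g F G hf.symm hg.symm
      (fun t ht => hbase f hf t (huicc ▸ ht) F hF)
      (fun t ht => hbase g hg t (huicc ▸ ht) G hG)
    rw [intervalIntegral.integral_symm] at key
    linear_combination -key


lemma hasSum_cexp (z : ℂ) : HasSum (fun n => z ^ n / n.factorial) (Complex.exp z) := by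
  rw [Complex.exp_eq_exp_ℂ]
  exact NormedSpace.expSeries_div_hasSum_exp z

lemma pow_rule (y x : ℝ) (q : ℝ → ℂ) (hq : IntervalIntegrable q volume y x) (n : ℕ) :
    ∀ t ∈ Set.uIcc y x,
      (∫ s in y..t, q s) ^ (n + 1)
        = ((n : ℂ) + 1) * ∫ s in y..t, q s * (∫ r in y..s, q r) ^ n := by
  induction n with
  | zero =>
    intro t ht
    simp
  | succ n ih =>
    intro t ht
    have hψc : ContinuousOn (fun t => ∫ s in y..t, q s) (Set.uIcc y x) :=
      intervalIntegral.continuousOn_primitive_interval' hq Set.left_mem_uIcc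
    have hsub : Set.uIcc y t ⊆ Set.uIcc y x := Set.uIcc_subset_uIcc Set.left_mem_uIcc ht
    have hqt : IntervalIntegrable q volume y t := hq.mono_set hsub
    have hg : IntervalIntegrable
        (fun s => ((n : ℂ) + 1) * (q s * (∫ r in y..s, q r) ^ n)) volume y t :=
      ((hq.mul_continuousOn (hψc.pow n)).mono_set hsub).const_mul _
    have key := prod_rule y t q (fun s => ((n : ℂ) + 1) * (q s * (∫ r in y..s, q r) ^ n))
      (fun t => ∫ s in y..t, q s) (fun t => (∫ s in y..t, q s) ^ (n + 1)) hqt hg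
      (by intro r hr; simp)
      (by
        intro r hr
        simp only [intervalIntegral.integral_same, ne_eq, Nat.succ_ne_zero,
          not_false_eq_true, zero_pow, zero_add]
        rw [intervalIntegral.integral_const_mul]
        exact ih r (hsub hr))
    simp only [intervalIntegral.integral_same, ne_eq, Nat.succ_ne_zero, not_false_eq_true,
      zero_pow, zero_add, mul_zero, zero_mul] at key
    have : (∫ s in y..t, q s) ^ (n + 1 + 1) = (∫ s in y..t, q s) * (∫ s in y..t, q s) ^ (n + 1) :=
      by ring
    rw [this, key]
    rw [show (fun s => (∫ r in y..s, q r) * (((n : ℂ) + 1) * (q s * (∫ r in y..s, q r) ^ n))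
          + q s * (∫ r in y..s, q r) ^ (n + 1))
        = (fun s => ((n : ℂ) + 1 + 1) * (q s * (∫ r in y..s, q r) ^ (n + 1))) from
      funext fun s => by ring]
    rw [intervalIntegral.integral_const_mul]
    push_cast
    ring


lemma real_exp_partial_le (r : ℝ) (hr : 0 ≤ r) (N : ℕ) :
    ∑ m ∈ Finset.range N, r ^ m / m.factorial ≤ Real.exp r := by
  have h : HasSum (fun n => r ^ n / n.factorial) (Real.exp r) := by
    rw [Real.exp_eq_exp_ℝ]
    exact NormedSpace.expSeries_div_hasSum_exp r
  exact sum_le_hasSum _ (fun m _ => by positivity) h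

lemma exp_rule (y x : ℝ) (q : ℝ → ℂ) (hq : IntervalIntegrable q volume y x) (w : ℂ) :
    Complex.exp (w * ∫ s in y..x, q s)
      = 1 + ∫ t in y..x, w * q t * Complex.exp (w * ∫ s in y..t, q s) := by
  set ψ : ℝ → ℂ := fun t => ∫ s in y..t, q s with hψ
  have hψc : ContinuousOn ψ (Set.uIcc y x) :=
    intervalIntegral.continuousOn_primitive_interval' hq Set.left_mem_uIcc
  obtain ⟨M, hM⟩ : ∃ M, ∀ t ∈ Set.uIcc y x, ‖ψ t‖ ≤ M :=
    isCompact_uIcc.exists_bound_of_continuousOn hψc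
  have hM0 : 0 ≤ M := le_trans (norm_nonneg _) (hM y Set.left_mem_uIcc)
  have hint : ∀ n : ℕ, IntervalIntegrable
      (fun t => w * q t * ((w * ψ t) ^ n / n.factorial)) volume y x := by
    intro n
    have hc : ContinuousOn (fun t => w * ((w * ψ t) ^ n / n.factorial)) (Set.uIcc y x) :=
      continuousOn_const.mul (((continuousOn_const.mul hψc).pow n).div_const _)
    have heq : (fun t => w * q t * ((w * ψ t) ^ n / (n.factorial : ℂ)))
        = fun t => (w * ((w * ψ t) ^ n / n.factorial)) * q t := funext fun t => by ring
    rw [heq]; exact hq.continuousOn_mul hc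
  set T : ℕ → ℝ → ℂ := fun N t => w * q t * ∑ m ∈ Finset.range N, (w * ψ t) ^ m / m.factorial
    with hT
  have hTint : ∀ N, IntervalIntegrable (T N) volume y x := by
    intro N
    have h := IntervalIntegrable.sum (μ := volume) (a := y) (b := x) (Finset.range N)
      (f := fun m t => w * q t * ((w * ψ t) ^ m / (m.factorial : ℂ))) (fun m _ => hint m)
    have heq : T N = fun t => ∑ m ∈ Finset.range N, w * q t * ((w * ψ t) ^ m / (m.factorial : ℂ)) :=
      funext fun t => Finset.mul_sum _ _ _
    have heq2 : (fun t => ∑ m ∈ Finset.range N, w * q t * ((w * ψ t) ^ m / (m.factorial : ℂ)))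
        = ∑ i ∈ Finset.range N, (fun t => w * q t * ((w * ψ t) ^ i / (i.factorial : ℂ))) := by
      funext t; simp [Finset.sum_apply]
    rw [heq, heq2]
    exact h
  have key : ∀ N : ℕ, ∑ n ∈ Finset.range (N + 1), (w * ψ x) ^ n / n.factorial
      = 1 + ∫ t in y..x, T N t := by
    intro N
    rw [Finset.sum_range_succ']
    simp only [pow_zero, Nat.factorial_zero, Nat.cast_one, div_one]
    rw [add_comm]
    congr 1
    have hterm : ∀ n : ℕ, (w * ψ x) ^ (n + 1) / ((n + 1).factorial : ℂ)
        = ∫ t in y..x, (w * q t * ((w * ψ t) ^ n / n.factorial)) := by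
      intro n
      have hp := pow_rule y x q hq n x Set.right_mem_uIcc
      have hfacn : ((n.factorial : ℂ)) ≠ 0 :=
        Nat.cast_ne_zero.mpr (Nat.factorial_ne_zero _)
      have hn1 : ((n : ℂ) + 1) ≠ 0 := by
        have : ((n + 1 : ℕ) : ℂ) ≠ 0 := Nat.cast_ne_zero.mpr (Nat.succ_ne_zero n)
        push_cast at this; exact this
      have hI : (∫ t in y..x, q t * (ψ t) ^ n) = (ψ x) ^ (n + 1) / ((n : ℂ) + 1) := by
        rw [hp]; field_simp
        rfl
      have heq : (fun t => w * q t * ((w * ψ t) ^ n / (n.factorial : ℂ)))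
          = fun t => (w ^ (n + 1) / n.factorial) * (q t * (ψ t) ^ n) :=
        funext fun t => by ring
      rw [heq, intervalIntegral.integral_const_mul, hI, Nat.factorial_succ, mul_pow]
      push_cast
      field_simp
    rw [Finset.sum_congr rfl (fun n _ => hterm n),
      ← intervalIntegral.integral_finset_sum (fun m _ => hint m)]
    apply intervalIntegral.integral_congr
    intro t _
    rw [hT]; simp only; rw [Finset.mul_sum]
  have hlim1 : Tendsto (fun N => ∑ n ∈ Finset.range (N + 1), (w * ψ x) ^ n / (n.factorial : ℂ))
      atTop (𝓝 (Complex.exp (w * ψ x))) :=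
    (hasSum_cexp (w * ψ x)).tendsto_sum_nat.comp (tendsto_add_atTop_nat 1)
  have hlim2 : Tendsto (fun N => ∫ t in y..x, T N t) atTop
      (𝓝 (∫ t in y..x, w * q t * Complex.exp (w * ψ t))) := by
    apply intervalIntegral.tendsto_integral_filter_of_dominated_convergence
      (fun t => ‖w‖ * ‖q t‖ * Real.exp (‖w‖ * M))
    · exact Eventually.of_forall fun N => (hTint N).def'.aestronglyMeasurable
    · refine Eventually.of_forall fun N => (ae_of_all _ fun t ht => ?_)
      have htu : t ∈ Set.uIcc y x := Set.uIoc_subset_uIcc ht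
      rw [hT]
      have hsum : ‖∑ m ∈ Finset.range N, (w * ψ t) ^ m / (m.factorial : ℂ)‖
          ≤ Real.exp (‖w‖ * M) :=
        calc ‖∑ m ∈ Finset.range N, (w * ψ t) ^ m / (m.factorial : ℂ)‖
          ≤ ∑ m ∈ Finset.range N, ‖(w * ψ t) ^ m / (m.factorial : ℂ)‖ :=
            norm_sum_le _ _
        _ ≤ ∑ m ∈ Finset.range N, (‖w‖ * M) ^ m / (m.factorial : ℝ) := by
            apply Finset.sum_le_sum
            intro m _
            rw [norm_div, norm_pow, norm_mul, Complex.norm_natCast]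
            gcongr
            exact hM t htu
        _ ≤ Real.exp (‖w‖ * M) := real_exp_partial_le _ (by positivity) _
      calc ‖w * q t * ∑ m ∈ Finset.range N, (w * ψ t) ^ m / (m.factorial : ℂ)‖
          = ‖w‖ * ‖q t‖ * ‖∑ m ∈ Finset.range N, (w * ψ t) ^ m / (m.factorial : ℂ)‖ := by
            simp [norm_mul]
        _ ≤ ‖w‖ * ‖q t‖ * Real.exp (‖w‖ * M) :=
            mul_le_mul_of_nonneg_left hsum (by positivity)
    · exact (hq.norm.const_mul _).mul_const _
    · refine ae_of_all _ fun t ht => ?_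
      rw [hT]
      simp only
      exact ((hasSum_cexp (w * ψ t)).tendsto_sum_nat).const_mul _
  have hkey : (fun N => ∑ n ∈ Finset.range (N + 1), (w * ψ x) ^ n / (n.factorial : ℂ))
      = fun N => 1 + ∫ t in y..x, T N t := funext key
  rw [hkey] at hlim1
  exact tendsto_nhds_unique hlim1 (hlim2.const_add 1)


lemma exp_rule' (y x : ℝ) (q : ℝ → ℝ) (θ : ℝ → ℝ)
    (hq : IntervalIntegrable q volume y x)
    (hθ : ∀ t ∈ Set.uIcc y x, θ t = θ y + ∫ s in y..t, q s) (w : ℂ) :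
    Complex.exp (w * θ x) = Complex.exp (w * θ y)
      + ∫ s in y..x, w * (q s : ℂ) * Complex.exp (w * θ s) := by
  set qc : ℝ → ℂ := fun s => (q s : ℂ) with hqcdef
  have hqc : IntervalIntegrable qc volume y x := ⟨hq.1.ofReal, hq.2.ofReal⟩
  have hθc : ∀ t ∈ Set.uIcc y x, (θ t : ℂ) = (θ y : ℂ) + ∫ s in y..t, qc s := by
    intro t ht
    rw [hθ t ht]
    push_cast
    rw [intervalIntegral.integral_ofReal]
  have h2 : ∀ s ∈ Set.uIcc y x,
      Complex.exp (w * θ s) = Complex.exp (w * θ y) * Complex.exp (w * ∫ r in y..s, qc r) := by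
    intro s hs
    rw [← Complex.exp_add]
    congr 1
    rw [show (θ s : ℂ) = (θ y : ℂ) + ∫ r in y..s, qc r from hθc s hs]
    ring
  have h1 := exp_rule y x qc hqc w
  calc Complex.exp (w * θ x)
      = Complex.exp (w * θ y) * Complex.exp (w * ∫ s in y..x, qc s) :=
        h2 x Set.right_mem_uIcc
    _ = Complex.exp (w * θ y) * (1 + ∫ s in y..x, w * qc s
          * Complex.exp (w * ∫ r in y..s, qc r)) := by rw [h1]
    _ = Complex.exp (w * θ y) + ∫ s in y..x, w * (q s : ℂ) * Complex.exp (w * θ s) := by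
        rw [mul_add, mul_one, ← intervalIntegral.integral_const_mul]
        congr 1
        apply intervalIntegral.integral_congr
        intro s hs
        simp only
        rw [h2 s hs]
        ring

lemma cos_rule (y x : ℝ) (q : ℝ → ℝ) (θ : ℝ → ℝ)
    (hq : IntervalIntegrable q volume y x)
    (hθ : ∀ t ∈ Set.uIcc y x, θ t = θ y + ∫ s in y..t, q s) :
    ((Real.cos (θ x) : ℂ) = (Real.cos (θ y) : ℂ)
      + ∫ s in y..x, (-(q s : ℂ)) * (Real.sin (θ s) : ℂ))
    ∧ ((Real.sin (θ x) : ℂ) = (Real.sin (θ y) : ℂ)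
      + ∫ s in y..x, (q s : ℂ) * (Real.cos (θ s) : ℂ)) := by
  have hE : ∀ r : ℝ, Complex.exp (Complex.I * r)
      = (Real.cos r : ℂ) + (Real.sin r : ℂ) * Complex.I := fun r => by
    rw [mul_comm, Complex.exp_mul_I, Complex.ofReal_cos, Complex.ofReal_sin]
  have hE' : ∀ r : ℝ, Complex.exp (-Complex.I * r)
      = (Real.cos r : ℂ) - (Real.sin r : ℂ) * Complex.I := fun r => by
    have h := hE (-r)
    rw [show -Complex.I * (r : ℂ) = Complex.I * ((-r : ℝ) : ℂ) by push_cast; ring, h,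
      Real.cos_neg, Real.sin_neg]
    push_cast
    ring
  have h1 := exp_rule' y x q θ hq hθ Complex.I
  have h2 := exp_rule' y x q θ hq hθ (-Complex.I)
  have hθc : ContinuousOn θ (Set.uIcc y x) := by
    apply ContinuousOn.congr (f := fun t => θ y + ∫ s in y..t, q s)
    · exact continuousOn_const.add
        (intervalIntegral.continuousOn_primitive_interval' hq Set.left_mem_uIcc)
    · intro t ht; exact hθ t ht
  have hqC : IntervalIntegrable (fun s => (q s : ℂ)) volume y x := ⟨hq.1.ofReal, hq.2.ofReal⟩
  have hqi : ∀ S : ℝ → ℂ, ContinuousOn S (Set.uIcc y x) →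
      IntervalIntegrable (fun s => (q s : ℂ) * S s) volume y x := fun S hS =>
    hqC.mul_continuousOn hS
  have hθcc : ContinuousOn (fun s => ((θ s : ℝ) : ℂ)) (Set.uIcc y x) :=
    Complex.continuous_ofReal.comp_continuousOn hθc
  have hexp : ContinuousOn (fun s => Complex.exp (Complex.I * θ s)) (Set.uIcc y x) :=
    Complex.continuous_exp.comp_continuousOn (continuousOn_const.mul hθcc)
  have hexp' : ContinuousOn (fun s => Complex.exp (-Complex.I * θ s)) (Set.uIcc y x) :=
    Complex.continuous_exp.comp_continuousOn (continuousOn_const.mul hθcc)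
  have hiE : IntervalIntegrable
      (fun s => Complex.I * (q s : ℂ) * Complex.exp (Complex.I * θ s)) volume y x := by
    have h := hqi (fun s => Complex.I * Complex.exp (Complex.I * θ s))
      (continuousOn_const.mul hexp)
    have heq : (fun s => Complex.I * (q s : ℂ) * Complex.exp (Complex.I * θ s))
        = fun s => (q s : ℂ) * (Complex.I * Complex.exp (Complex.I * θ s)) :=
      funext fun s => by ring
    rw [heq]; exact h
  have hiE' : IntervalIntegrable
      (fun s => -Complex.I * (q s : ℂ) * Complex.exp (-Complex.I * θ s)) volume y x := by
    have h := hqi (fun s => -Complex.I * Complex.exp (-Complex.I * θ s))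
      (continuousOn_const.mul hexp')
    have heq : (fun s => -Complex.I * (q s : ℂ) * Complex.exp (-Complex.I * θ s))
        = fun s => (q s : ℂ) * (-Complex.I * Complex.exp (-Complex.I * θ s)) :=
      funext fun s => by ring
    rw [heq]; exact h
  constructor
  · have hpoint : ∫ s in y..x, (-(q s : ℂ)) * (Real.sin (θ s) : ℂ)
        = ((∫ s in y..x, Complex.I * (q s : ℂ) * Complex.exp (Complex.I * θ s))
          + ∫ s in y..x, -Complex.I * (q s : ℂ) * Complex.exp (-Complex.I * θ s)) / 2 := by
      rw [← intervalIntegral.integral_add hiE hiE', eq_div_iff (two_ne_zero),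
        ← intervalIntegral.integral_mul_const]
      apply intervalIntegral.integral_congr
      intro s _
      simp only
      rw [hE (θ s), hE' (θ s)]
      linear_combination (-2 * (q s : ℂ) * (Real.sin (θ s) : ℂ)) * Complex.I_sq
    rw [hpoint]
    rw [show (Real.cos (θ x) : ℂ)
        = (Complex.exp (Complex.I * θ x) + Complex.exp (-Complex.I * θ x)) / 2 by
      rw [hE (θ x), hE' (θ x)]; ring]
    rw [h1, h2, hE (θ y), hE' (θ y)]
    ring
  · have hpoint : ∫ s in y..x, (q s : ℂ) * (Real.cos (θ s) : ℂ)
        = ((∫ s in y..x, Complex.I * (q s : ℂ) * Complex.exp (Complex.I * θ s))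
          - ∫ s in y..x, -Complex.I * (q s : ℂ) * Complex.exp (-Complex.I * θ s))
          * (-Complex.I) / 2 := by
      rw [← intervalIntegral.integral_sub hiE hiE', eq_div_iff (two_ne_zero),
        ← intervalIntegral.integral_mul_const, ← intervalIntegral.integral_mul_const]
      apply intervalIntegral.integral_congr
      intro s _
      simp only
      rw [hE (θ s), hE' (θ s)]
      linear_combination (2 * (q s : ℂ) * (Real.cos (θ s) : ℂ)) * Complex.I_sq
    rw [hpoint]
    rw [show (Real.sin (θ x) : ℂ)
        = (Complex.exp (Complex.I * θ x) - Complex.exp (-Complex.I * θ x)) * (-Complex.I) / 2 by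
      rw [hE (θ x), hE' (θ x)]
      linear_combination (Real.sin (θ x) : ℂ) * Complex.I_sq]
    rw [h1, h2, hE (θ y), hE' (θ y)]
    linear_combination (-(Real.sin (θ y) : ℂ)) * Complex.I_sq


lemma gaugeTrans (a b : ℝ) (qel qam μf w : ℝ → ℝ)
    (hw : LocInt a b w)
    (x₀ : ℝ) (hx₀ : x₀ ∈ Set.Ioo a b)
    (θ : ℝ → ℝ) (hθ : ∀ t, θ t = ∫ s in x₀..t, w s)
    (z : ℂ) (u v : ℝ → ℂ × ℂ)
    (hv : ∀ t, v t = ((Real.cos (θ t) : ℂ) * (u t).1 + (Real.sin (θ t) : ℂ) * (u t).2,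
                      -(Real.sin (θ t) : ℂ) * (u t).1 + (Real.cos (θ t) : ℂ) * (u t).2))
    (hu : IsSol a b (fun t => qel t + μf t) qam qam (fun t => qel t - μf t) z u) :
    IsSol a b
      (fun t => (qel t - w t) + (μf t * Real.cos (2 * θ t) + qam t * Real.sin (2 * θ t)))
      (fun t => qam t * Real.cos (2 * θ t) - μf t * Real.sin (2 * θ t))
      (fun t => qam t * Real.cos (2 * θ t) - μf t * Real.sin (2 * θ t))
      (fun t => (qel t - w t) - (μf t * Real.cos (2 * θ t) + qam t * Real.sin (2 * θ t)))
      z v := by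
  obtain ⟨hucont, hueq⟩ := hu
  have hsub : ∀ {y x : ℝ}, y ∈ Set.Ioo a b → x ∈ Set.Ioo a b →
      Set.uIcc y x ⊆ Set.Ioo a b := fun hy hx => Set.ordConnected_Ioo.uIcc_subset hy hx
  have hθpair : ∀ y ∈ Set.Ioo a b, ∀ t ∈ Set.Ioo a b, θ t = θ y + ∫ s in y..t, w s := by
    intro y hy t ht
    rw [hθ t, hθ y,
      ← intervalIntegral.integral_add_adjacent_intervals (hw x₀ hx₀ y hy) (hw y hy t ht)]
  have hθcont : ContinuousOn θ (Set.Ioo a b) := by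
    intro p hp
    obtain ⟨y, hy1, hy2⟩ := exists_between hp.1
    obtain ⟨x, hx1, hx2⟩ := exists_between hp.2
    have hyI : y ∈ Set.Ioo a b := ⟨hy1, lt_trans hy2 hp.2⟩
    have hxI : x ∈ Set.Ioo a b := ⟨lt_trans hp.1 hx1, hx2⟩
    have hcont : ContinuousOn θ (Set.uIcc y x) := by
      apply ContinuousOn.congr (f := fun t => θ y + ∫ s in y..t, w s)
      · exact continuousOn_const.add
          (intervalIntegral.continuousOn_primitive_interval' (hw y hyI x hxI) Set.left_mem_uIcc)
      · intro t ht; exact hθpair y hyI t (hsub hyI hxI ht)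
    have hmem : Set.uIcc y x ∈ 𝓝 p := by
      rw [Set.uIcc_of_le (le_trans hy2.le hx1.le)]
      exact Icc_mem_nhds hy2 hx1
    exact (hcont.continuousAt hmem).continuousWithinAt
  have hccont : ContinuousOn (fun t => ((Real.cos (θ t) : ℝ) : ℂ)) (Set.Ioo a b) :=
    Complex.continuous_ofReal.comp_continuousOn (Real.continuous_cos.comp_continuousOn hθcont)
  have hscont : ContinuousOn (fun t => ((Real.sin (θ t) : ℝ) : ℂ)) (Set.Ioo a b) :=
    Complex.continuous_ofReal.comp_continuousOn (Real.continuous_sin.comp_continuousOn hθcont)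
  have hu1cont : ContinuousOn (fun t => (u t).1) (Set.Ioo a b) := hucont.fst
  have hu2cont : ContinuousOn (fun t => (u t).2) (Set.Ioo a b) := hucont.snd
  have hvcont : ContinuousOn v (Set.Ioo a b) := by
    apply ContinuousOn.congr (f := fun t =>
      (((Real.cos (θ t) : ℂ) * (u t).1 + (Real.sin (θ t) : ℂ) * (u t).2,
        -(Real.sin (θ t) : ℂ) * (u t).1 + (Real.cos (θ t) : ℂ) * (u t).2) : ℂ × ℂ))
    · exact ((hccont.mul hu1cont).add (hscont.mul hu2cont)).prodMk
        (((hscont.neg).mul hu1cont).add (hccont.mul hu2cont))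
    · intro t _; exact hv t
  refine ⟨hvcont, ?_⟩
  intro y hy x hx
  have hsyx := hsub hy hx
  have hwyx : IntervalIntegrable w volume y x := hw y hy x hx
  have hwC : IntervalIntegrable (fun s => ((w s : ℝ) : ℂ)) volume y x :=
    ⟨hwyx.1.ofReal, hwyx.2.ofReal⟩
  -- interval continuities
  have hcY : ContinuousOn (fun t => ((Real.cos (θ t) : ℝ) : ℂ)) (Set.uIcc y x) :=
    hccont.mono hsyx
  have hsY : ContinuousOn (fun t => ((Real.sin (θ t) : ℝ) : ℂ)) (Set.uIcc y x) :=
    hscont.mono hsyx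
  have hu1Y : ContinuousOn (fun t => (u t).1) (Set.uIcc y x) := hu1cont.mono hsyx
  have hu2Y : ContinuousOn (fun t => (u t).2) (Set.uIcc y x) := hu2cont.mono hsyx
  -- cos and sin integral equations on [[y, x]]
  have hcs : ∀ t ∈ Set.uIcc y x,
      ((Real.cos (θ t) : ℂ) = (Real.cos (θ y) : ℂ)
        + ∫ s in y..t, (-(w s : ℂ)) * (Real.sin (θ s) : ℂ))
      ∧ ((Real.sin (θ t) : ℂ) = (Real.sin (θ y) : ℂ)
        + ∫ s in y..t, (w s : ℂ) * (Real.cos (θ s) : ℂ)) := by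
    intro t ht
    apply cos_rule y t w θ (hw y hy t (hsyx ht))
    intro r hr
    exact hθpair y hy r (hsyx (Set.uIcc_subset_uIcc Set.left_mem_uIcc ht hr))
  -- the old integrands
  set G₁ : ℝ → ℂ := fun t => ((z • u t).2 - ((qam t : ℝ) : ℂ) * (u t).1
    - (((qel t - μf t : ℝ)) : ℂ) * (u t).2) with hG₁def
  set G₂ : ℝ → ℂ := fun t => ((((qel t + μf t : ℝ)) : ℂ) * (u t).1
    + ((qam t : ℝ) : ℂ) * (u t).2 - (z • u t).1) with hG₂def
  have hG₁int : IntervalIntegrable G₁ volume y x := (hueq y hy x hx).1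
  have hG₂int : IntervalIntegrable G₂ volume y x := (hueq y hy x hx).2.1
  have hu1eq : ∀ t ∈ Set.uIcc y x, (u t).1 = (u y).1 + ∫ s in y..t, G₁ s :=
    fun t ht => (hueq y hy t (hsyx ht)).2.2.1
  have hu2eq : ∀ t ∈ Set.uIcc y x, (u t).2 = (u y).2 + ∫ s in y..t, G₂ s :=
    fun t ht => (hueq y hy t (hsyx ht)).2.2.2
  -- derivative-integrands of cos∘θ, sin∘θ, -sin∘θ as complex functions
  have hfc : IntervalIntegrable (fun s => (-(w s : ℂ)) * (Real.sin (θ s) : ℂ)) volume y x := by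
    have h := hwC.mul_continuousOn hsY.neg
    have heq : (fun s => (-(w s : ℂ)) * (Real.sin (θ s) : ℂ))
        = fun s => ((w s : ℝ) : ℂ) * (-(Real.sin (θ s) : ℂ)) := funext fun s => by ring
    rw [heq]; exact h
  have hfs : IntervalIntegrable (fun s => (w s : ℂ) * (Real.cos (θ s) : ℂ)) volume y x :=
    hwC.mul_continuousOn hcY
  have hfs' : IntervalIntegrable (fun s => -((w s : ℂ) * (Real.cos (θ s) : ℂ))) volume y x :=
    hfs.neg
  -- the four product rules
  have hA := prod_rule y x (fun s => (-(w s : ℂ)) * (Real.sin (θ s) : ℂ)) G₁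
    (fun t => (Real.cos (θ t) : ℂ)) (fun t => (u t).1) hfc hG₁int
    (fun t ht => (hcs t ht).1) hu1eq
  have hB := prod_rule y x (fun s => (w s : ℂ) * (Real.cos (θ s) : ℂ)) G₂
    (fun t => (Real.sin (θ t) : ℂ)) (fun t => (u t).2) hfs hG₂int
    (fun t ht => (hcs t ht).2) hu2eq
  have hC := prod_rule y x (fun s => -((w s : ℂ) * (Real.cos (θ s) : ℂ))) G₁
    (fun t => -(Real.sin (θ t) : ℂ)) (fun t => (u t).1) hfs' hG₁int
    (fun t ht => by
      rw [intervalIntegral.integral_neg, (hcs t ht).2]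
      ring) hu1eq
  have hD := prod_rule y x (fun s => (-(w s : ℂ)) * (Real.sin (θ s) : ℂ)) G₂
    (fun t => (Real.cos (θ t) : ℂ)) (fun t => (u t).2) hfc hG₂int
    (fun t ht => (hcs t ht).1) hu2eq
  -- integrability of the pieces
  have hP1 : IntervalIntegrable (fun t => (Real.cos (θ t) : ℂ) * G₁ t
      + ((-(w t : ℂ)) * (Real.sin (θ t) : ℂ)) * (u t).1) volume y x :=
    (hG₁int.continuousOn_mul hcY).add (hfc.mul_continuousOn hu1Y)
  have hP2 : IntervalIntegrable (fun t => (Real.sin (θ t) : ℂ) * G₂ t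
      + ((w t : ℂ) * (Real.cos (θ t) : ℂ)) * (u t).2) volume y x :=
    (hG₂int.continuousOn_mul hsY).add (hfs.mul_continuousOn hu2Y)
  have hP3 : IntervalIntegrable (fun t => (-(Real.sin (θ t) : ℂ)) * G₁ t
      + (-((w t : ℂ) * (Real.cos (θ t) : ℂ))) * (u t).1) volume y x :=
    (hG₁int.continuousOn_mul hsY.neg).add (hfs'.mul_continuousOn hu1Y)
  have hP4 : IntervalIntegrable (fun t => (Real.cos (θ t) : ℂ) * G₂ t
      + ((-(w t : ℂ)) * (Real.sin (θ t) : ℂ)) * (u t).2) volume y x :=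
    (hG₂int.continuousOn_mul hcY).add (hfc.mul_continuousOn hu2Y)
  -- pythagoras over ℂ
  have hpy : ∀ t : ℝ, (Complex.sin ((θ t : ℝ) : ℂ)) ^ 2 + (Complex.cos ((θ t : ℝ) : ℂ)) ^ 2 = 1 :=
    fun t => Complex.sin_sq_add_cos_sq _
  -- pointwise identity for the first integrand
  have hH1 : (fun t => ((z • v t).2
        - ((qam t * Real.cos (2 * θ t) - μf t * Real.sin (2 * θ t) : ℝ) : ℂ) * (v t).1
        - (((qel t - w t) - (μf t * Real.cos (2 * θ t) + qam t * Real.sin (2 * θ t)) : ℝ) : ℂ)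
          * (v t).2))
      = fun t => ((Real.cos (θ t) : ℂ) * G₁ t
          + ((-(w t : ℂ)) * (Real.sin (θ t) : ℂ)) * (u t).1)
        + ((Real.sin (θ t) : ℂ) * G₂ t
          + ((w t : ℂ) * (Real.cos (θ t) : ℂ)) * (u t).2) := by
    funext t
    rw [hv t, hG₁def, hG₂def]
    simp only [Prod.smul_mk, Prod.smul_fst, Prod.smul_snd, smul_eq_mul, Prod.fst, Prod.snd]
    rw [Real.cos_two_mul, Real.sin_two_mul]
    push_cast
    linear_combination ((-2 * (qam t : ℂ) * Complex.cos ((θ t : ℝ) : ℂ)) * (u t).1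
      + (2 * (μf t : ℂ) * Complex.cos ((θ t : ℝ) : ℂ)) * (u t).2) * hpy t
  have hH2 : (fun t => ((((qel t - w t) + (μf t * Real.cos (2 * θ t)
          + qam t * Real.sin (2 * θ t)) : ℝ) : ℂ) * (v t).1
        + ((qam t * Real.cos (2 * θ t) - μf t * Real.sin (2 * θ t) : ℝ) : ℂ) * (v t).2
        - (z • v t).1))
      = fun t => ((-(Real.sin (θ t) : ℂ)) * G₁ t
          + (-((w t : ℂ) * (Real.cos (θ t) : ℂ))) * (u t).1)
        + ((Real.cos (θ t) : ℂ) * G₂ t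
          + ((-(w t : ℂ)) * (Real.sin (θ t) : ℂ)) * (u t).2) := by
    funext t
    rw [hv t, hG₁def, hG₂def]
    simp only [Prod.smul_mk, Prod.smul_fst, Prod.smul_snd, smul_eq_mul, Prod.fst, Prod.snd]
    rw [Real.cos_two_mul, Real.sin_two_mul]
    push_cast
    linear_combination ((2 * (μf t : ℂ) * Complex.cos ((θ t : ℝ) : ℂ)) * (u t).1
      + (2 * (qam t : ℂ) * Complex.cos ((θ t : ℝ) : ℂ)) * (u t).2) * hpy t
  refine ⟨?_, ?_, ?_, ?_⟩
  · rw [hH1]; exact hP1.add hP2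
  · rw [hH2]; exact hP3.add hP4
  · rw [hH1, intervalIntegral.integral_add hP1 hP2, hv x, hv y]
    simp only [Prod.fst]
    linear_combination hA + hB
  · rw [hH2, intervalIntegral.integral_add hP3 hP4, hv x, hv y]
    simp only [Prod.snd]
    linear_combination hC + hD


theorem statement1
    (a b : ℝ) (hab : a < b) (m : ℝ) (hm : 0 ≤ m)
    (qel qam qsc : ℝ → ℝ)
    (hqel : LocInt a b qel) (hqam : LocInt a b qam) (hqsc : LocInt a b qsc)
    (x₀ : ℝ) (hx₀ : x₀ ∈ Set.Ioo a b)
    (φ : ℝ → ℝ) (hφ : ∀ x, φ x = ∫ t in x₀..x, qel t)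
    (z : ℂ) (u v : ℝ → ℂ × ℂ)
    (hv : ∀ x, v x = ((Real.cos (φ x) : ℂ) * (u x).1 + (Real.sin (φ x) : ℂ) * (u x).2,
                      -(Real.sin (φ x) : ℂ) * (u x).1 + (Real.cos (φ x) : ℂ) * (u x).2)) :
    DiracSol a b m qel qam qsc z u ↔
      IsSol a b
        (fun x => (m + qsc x) * Real.cos (2 * φ x) + qam x * Real.sin (2 * φ x))
        (fun x => qam x * Real.cos (2 * φ x) - (m + qsc x) * Real.sin (2 * φ x))
        (fun x => qam x * Real.cos (2 * φ x) - (m + qsc x) * Real.sin (2 * φ x))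
        (fun x => -((m + qsc x) * Real.cos (2 * φ x) + qam x * Real.sin (2 * φ x)))
        z v := by
  constructor
  · intro hu
    have hu' : IsSol a b (fun t => qel t + (m + qsc t)) qam qam
        (fun t => qel t - (m + qsc t)) z u := by
      have e1 : (fun t => qel t + (m + qsc t)) = (fun x => qel x + m + qsc x) :=
        funext fun t => by ring
      have e2 : (fun t => qel t - (m + qsc t)) = (fun x => qel x - m - qsc x) :=
        funext fun t => by ring
      rw [e1, e2]; exact hu
    have result : IsSol a b
        (fun t => (qel t - qel t)
          + ((m + qsc t) * Real.cos (2 * φ t) + qam t * Real.sin (2 * φ t)))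
        (fun t => qam t * Real.cos (2 * φ t) - (m + qsc t) * Real.sin (2 * φ t))
        (fun t => qam t * Real.cos (2 * φ t) - (m + qsc t) * Real.sin (2 * φ t))
        (fun t => (qel t - qel t)
          - ((m + qsc t) * Real.cos (2 * φ t) + qam t * Real.sin (2 * φ t)))
        z v :=
      gaugeTrans a b qel qam (fun t => m + qsc t) qel hqel x₀ hx₀ φ hφ z u v hv hu'
    have f1 : (fun t => (qel t - qel t)
          + ((m + qsc t) * Real.cos (2 * φ t) + qam t * Real.sin (2 * φ t)))
        = (fun x => (m + qsc x) * Real.cos (2 * φ x) + qam x * Real.sin (2 * φ x)) :=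
      funext fun t => by ring
    have f2 : (fun t => (qel t - qel t)
          - ((m + qsc t) * Real.cos (2 * φ t) + qam t * Real.sin (2 * φ t)))
        = (fun x => -((m + qsc x) * Real.cos (2 * φ x) + qam x * Real.sin (2 * φ x))) :=
      funext fun t => by ring
    rw [f1, f2] at result
    exact result
  · intro hvSol
    set w' : ℝ → ℝ := fun t => -qel t with hw'def
    have hw' : LocInt a b w' := fun p hp r hr => (hqel p hp r hr).neg
    set θ' : ℝ → ℝ := fun t => -φ t with hθ'def
    have hθ' : ∀ t, θ' t = ∫ s in x₀..t, w' s := by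
      intro t
      rw [hθ'def, hw'def]
      simp only
      rw [hφ t, intervalIntegral.integral_neg]
    have hpy : ∀ t : ℝ, (Complex.sin ((φ t : ℝ) : ℂ)) ^ 2
        + (Complex.cos ((φ t : ℝ) : ℂ)) ^ 2 = 1 := fun t => Complex.sin_sq_add_cos_sq _
    have hv' : ∀ t, u t = ((Real.cos (θ' t) : ℂ) * (v t).1 + (Real.sin (θ' t) : ℂ) * (v t).2,
        -(Real.sin (θ' t) : ℂ) * (v t).1 + (Real.cos (θ' t) : ℂ) * (v t).2) := by
      intro t
      rw [hθ'def]
      simp only [Real.cos_neg, Real.sin_neg]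
      rw [hv t]
      rw [Prod.ext_iff]
      constructor
      · simp only [Prod.fst, Prod.snd]
        push_cast
        linear_combination (-(u t).1) * hpy t
      · simp only [Prod.fst, Prod.snd]
        push_cast
        linear_combination (-(u t).2) * hpy t
    have hvSol' : IsSol a b
        (fun t => (fun _ : ℝ => (0:ℝ)) t
          + ((m + qsc t) * Real.cos (2 * φ t) + qam t * Real.sin (2 * φ t)))
        (fun t => qam t * Real.cos (2 * φ t) - (m + qsc t) * Real.sin (2 * φ t))
        (fun t => qam t * Real.cos (2 * φ t) - (m + qsc t) * Real.sin (2 * φ t))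
        (fun t => (fun _ : ℝ => (0:ℝ)) t
          - ((m + qsc t) * Real.cos (2 * φ t) + qam t * Real.sin (2 * φ t)))
        z v := by
      have e1 : (fun t => (fun _ : ℝ => (0:ℝ)) t
            + ((m + qsc t) * Real.cos (2 * φ t) + qam t * Real.sin (2 * φ t)))
          = (fun x => (m + qsc x) * Real.cos (2 * φ x) + qam x * Real.sin (2 * φ x)) :=
        funext fun t => by simp
      have e2 : (fun t => (fun _ : ℝ => (0:ℝ)) t
            - ((m + qsc t) * Real.cos (2 * φ t) + qam t * Real.sin (2 * φ t)))
          = (fun x => -((m + qsc x) * Real.cos (2 * φ x) + qam x * Real.sin (2 * φ x))) :=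
        funext fun t => by simp
      rw [e1, e2]; exact hvSol
    have result : IsSol a b
        (fun t => ((0:ℝ) - w' t)
          + (((m + qsc t) * Real.cos (2 * φ t) + qam t * Real.sin (2 * φ t))
              * Real.cos (2 * θ' t)
            + (qam t * Real.cos (2 * φ t) - (m + qsc t) * Real.sin (2 * φ t))
              * Real.sin (2 * θ' t)))
        (fun t => (qam t * Real.cos (2 * φ t) - (m + qsc t) * Real.sin (2 * φ t))
            * Real.cos (2 * θ' t)
          - ((m + qsc t) * Real.cos (2 * φ t) + qam t * Real.sin (2 * φ t))
            * Real.sin (2 * θ' t))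
        (fun t => (qam t * Real.cos (2 * φ t) - (m + qsc t) * Real.sin (2 * φ t))
            * Real.cos (2 * θ' t)
          - ((m + qsc t) * Real.cos (2 * φ t) + qam t * Real.sin (2 * φ t))
            * Real.sin (2 * θ' t))
        (fun t => ((0:ℝ) - w' t)
          - (((m + qsc t) * Real.cos (2 * φ t) + qam t * Real.sin (2 * φ t))
              * Real.cos (2 * θ' t)
            + (qam t * Real.cos (2 * φ t) - (m + qsc t) * Real.sin (2 * φ t))
              * Real.sin (2 * θ' t)))
        z u :=
      gaugeTrans a b (fun _ => (0:ℝ))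
        (fun t => qam t * Real.cos (2 * φ t) - (m + qsc t) * Real.sin (2 * φ t))
        (fun t => (m + qsc t) * Real.cos (2 * φ t) + qam t * Real.sin (2 * φ t))
        w' hw' x₀ hx₀ θ' hθ' z v u hv' hvSol'
    have hpy2 : ∀ t : ℝ, Real.sin (2 * φ t) ^ 2 + Real.cos (2 * φ t) ^ 2 = 1 :=
      fun t => Real.sin_sq_add_cos_sq _
    have hneg : ∀ t : ℝ, Real.cos (2 * θ' t) = Real.cos (2 * φ t)
        ∧ Real.sin (2 * θ' t) = -Real.sin (2 * φ t) := by
      intro t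
      rw [hθ'def]
      simp only
      rw [show (2:ℝ) * -φ t = -(2 * φ t) by ring, Real.cos_neg, Real.sin_neg]
      exact ⟨rfl, rfl⟩
    have g1 : (fun t => ((0:ℝ) - w' t)
          + (((m + qsc t) * Real.cos (2 * φ t) + qam t * Real.sin (2 * φ t))
              * Real.cos (2 * θ' t)
            + (qam t * Real.cos (2 * φ t) - (m + qsc t) * Real.sin (2 * φ t))
              * Real.sin (2 * θ' t)))
        = (fun x => qel x + m + qsc x) := by
      funext t
      rw [(hneg t).1, (hneg t).2, hw'def]
      simp only
      linear_combination (m + qsc t) * hpy2 t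
    have g2 : (fun t => (qam t * Real.cos (2 * φ t) - (m + qsc t) * Real.sin (2 * φ t))
            * Real.cos (2 * θ' t)
          - ((m + qsc t) * Real.cos (2 * φ t) + qam t * Real.sin (2 * φ t))
            * Real.sin (2 * θ' t))
        = qam := by
      funext t
      rw [(hneg t).1, (hneg t).2]
      linear_combination qam t * hpy2 t
    have g4 : (fun t => ((0:ℝ) - w' t)
          - (((m + qsc t) * Real.cos (2 * φ t) + qam t * Real.sin (2 * φ t))
              * Real.cos (2 * θ' t)
            + (qam t * Real.cos (2 * φ t) - (m + qsc t) * Real.sin (2 * φ t))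
              * Real.sin (2 * θ' t)))
        = (fun x => qel x - m - qsc x) := by
      funext t
      rw [(hneg t).1, (hneg t).2, hw'def]
      simp only
      linear_combination (-(m + qsc t)) * hpy2 t
    rw [g1, g2, g4] at result
    exact result


end
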